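/- Quantum violation of splitting: let d be prime and ρ_{Y₀Y₁EC} = (1/d²)∑_{y₀,y₁} |y₀⟩⟨y₀| ⊗ |y₁⟩⟨y₁| ⊗ |Ψ_{y₀y₁}⟩⟨Ψ_{y₀y₁}| ⊗ σ^C_{y₀y₁} be any extension by a classical bit C of the encoding state (with σ^C_{y₀y₁} = q_{y₀y₁}|0⟩⟨0| + (1−q_{y₀y₁})|1⟩⟨1| arbitrary). Then for each c ∈ {0,1}, conditioned on C = c, the probability of guessing Y_c from the register E is at least 1/2 + 1/(2√d). Equivalently, H_∞(Y_C | E, C) ≤ −log₂(1/2 + 1/(2√d)) ≤ 1. -/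

import Mathlib

open Matrix Complex Finset
open scoped ComplexOrder
noncomputable section

def ω (d : ℕ) : ℂ := Complex.exp (2 * ↑Real.pi * Complex.I / (d : ℂ))

lemma omega_pow_d {d : ℕ} (hd : 0 < d) : ω d ^ d = 1 :=
  (Complex.isPrimitiveRoot_exp d hd.ne').pow_eq_one

lemma abs_omega {d : ℕ} : ‖ω d‖ = 1 := by
  have h : (2 * (Real.pi : ℂ) * Complex.I / (d : ℂ)) = ((2 * Real.pi / d : ℝ) : ℂ) * Complex.I := by
    push_cast; ring
  rw [ω, h, Complex.norm_exp_ofReal_mul_I]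

lemma normSq_omega_pow {d : ℕ} (n : ℕ) : Complex.normSq (ω d ^ n) = 1 := by
  rw [map_pow, Complex.normSq_eq_norm_sq, abs_omega]
  simp

lemma conj_mul_omega_pow {d : ℕ} (n : ℕ) :
    (starRingEnd ℂ) (ω d ^ n) * ω d ^ n = 1 := by
  rw [mul_comm, Complex.mul_conj, normSq_omega_pow]
  simp

lemma conj_omega {d : ℕ} : (starRingEnd ℂ) (ω d) = (ω d)⁻¹ := by
  have := conj_mul_omega_pow (d := d) 1
  simp only [pow_one] at this
  exact eq_inv_of_mul_eq_one_left this

lemma omega_pow_mod {d : ℕ} (hd : 0 < d) (m : ℕ) : ω d ^ (m % d) = ω d ^ m := by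
  conv_rhs => rw [← Nat.div_add_mod m d]
  rw [pow_add, pow_mul, omega_pow_d hd, one_pow, one_mul]

def Xp (d : ℕ) : Matrix (Fin d) (Fin d) ℂ :=
  Matrix.of fun j k => if (j : ℕ) = ((k : ℕ) + 1) % d then 1 else 0

def Zp (d : ℕ) : Matrix (Fin d) (Fin d) ℂ :=
  Matrix.diagonal fun j => ω d ^ (j : ℕ)

def Fm (d : ℕ) : Matrix (Fin d) (Fin d) ℂ :=
  Matrix.of fun j k => ω d ^ ((j : ℕ) * (k : ℕ)) / ((Real.sqrt d : ℝ) : ℂ)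

def ket (d : ℕ) (y : Fin d) : Fin d → ℂ := fun j => if j = y then 1 else 0

def e0 (d : ℕ) : Fin d → ℂ := fun j => if (j : ℕ) = 0 then 1 else 0

def Psi (d : ℕ) : Fin d → ℂ :=
  (((Real.sqrt (2 * (1 + 1 / Real.sqrt d)) : ℝ) : ℂ))⁻¹ •
    (e0 d + (Fm d).mulVec (e0 d))

def dotc {d : ℕ} (v w : Fin d → ℂ) : ℂ := ∑ j, (starRingEnd ℂ) (v j) * w j

def outer {d : ℕ} (v : Fin d → ℂ) : Matrix (Fin d) (Fin d) ℂ :=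
  Matrix.of fun i j => v i * (starRingEnd ℂ) (v j)

def enc (d : ℕ) (y₀ y₁ : Fin d) : Fin d → ℂ :=
  ((Xp d ^ (y₀ : ℕ)) * (Zp d ^ (y₁ : ℕ))).mulVec (Psi d)

lemma Xp_pow {d : ℕ} (hd : 0 < d) (a : ℕ) :
    Xp d ^ a = Matrix.of fun j k : Fin d => if (j : ℕ) = ((k : ℕ) + a) % d then 1 else 0 := by
  induction a with
  | zero =>
    ext j k
    simp only [pow_zero, Matrix.one_apply, Matrix.of_apply, Nat.add_zero,
      Nat.mod_eq_of_lt k.isLt, Fin.ext_iff]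
  | succ a ih =>
    rw [pow_succ, ih]
    ext j k
    rw [Matrix.mul_apply]
    have hlt : ((k : ℕ) + 1) % d < d := Nat.mod_lt _ hd
    have key : ∀ m : Fin d,
        (Matrix.of fun j k : Fin d => if (j : ℕ) = ((k : ℕ) + a) % d then (1:ℂ) else 0) j m *
          Xp d m k
        = if m = (⟨((k:ℕ)+1) % d, hlt⟩ : Fin d) then
            (if (j : ℕ) = (((k:ℕ)+1) % d + a) % d then (1:ℂ) else 0) else 0 := by
      intro m
      by_cases hm : m = (⟨((k:ℕ)+1) % d, hlt⟩ : Fin d)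
      · subst hm
        simp [Xp]
      · have : ¬ ((m : ℕ) = ((k:ℕ)+1) % d) := by
          simpa [Fin.ext_iff] using hm
        simp [Xp, this, hm]
    rw [Finset.sum_congr rfl fun m _ => key m, Finset.sum_ite_eq' _ _ _]
    simp only [Finset.mem_univ, if_true, Matrix.of_apply]
    congr 1
    rw [Nat.mod_add_mod]
    ring_nf

lemma Zp_pow {d : ℕ} (b : ℕ) :
    Zp d ^ b = Matrix.diagonal fun j : Fin d => ω d ^ ((j : ℕ) * b) := by
  rw [Zp, Matrix.diagonal_pow]
  ext j k
  by_cases h : j = k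
  · subst h; simp [Matrix.diagonal_apply_eq, pow_mul]
  · simp [Matrix.diagonal_apply_ne _ h]

lemma enc_apply {d : ℕ} (hd : 0 < d) (y₀ y₁ : Fin d) (j : Fin d) :
    enc d y₀ y₁ j = ∑ k : Fin d,
      (if (j : ℕ) = ((k : ℕ) + (y₀ : ℕ)) % d then (1:ℂ) else 0) *
        (ω d ^ ((k : ℕ) * (y₁ : ℕ)) * Psi d k) := by
  rw [enc, ← Matrix.mulVec_mulVec, Xp_pow hd, Matrix.mulVec]
  simp only [dotProduct, Matrix.of_apply]
  refine Finset.sum_congr rfl fun k _ => ?_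
  rw [Zp_pow, Matrix.mulVec_diagonal]

def fv (d : ℕ) (v : Fin d) : Fin d → ℂ :=
  fun j => ω d ^ ((j : ℕ) * (v : ℕ)) / ((Real.sqrt d : ℝ) : ℂ)

lemma conj_dotc {d : ℕ} (v w : Fin d → ℂ) :
    (starRingEnd ℂ) (dotc v w) = ∑ j, v j * (starRingEnd ℂ) (w j) := by
  rw [dotc, map_sum]
  refine Finset.sum_congr rfl fun j _ => ?_
  rw [_root_.map_mul, Complex.conj_conj, mul_comm]

lemma trace_outer_mul_outer {d : ℕ} (u w : Fin d → ℂ) :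
    (outer u * outer w).trace = (starRingEnd ℂ) (dotc u w) * dotc u w := by
  rw [conj_dotc, dotc, Finset.sum_mul_sum, Matrix.trace]
  simp only [Matrix.diag, Matrix.mul_apply, outer, Matrix.of_apply]
  refine Finset.sum_congr rfl fun i _ => Finset.sum_congr rfl fun j _ => ?_
  ring

lemma trace_outer_re {d : ℕ} (u w : Fin d → ℂ) :
    ((outer u * outer w).trace).re = Complex.normSq (dotc u w) := by
  rw [trace_outer_mul_outer, mul_comm, Complex.mul_conj]
  simp

lemma posSemidef_outer {d : ℕ} (v : Fin d → ℂ) : (outer v).PosSemidef := by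
  rw [Matrix.posSemidef_iff_dotProduct_mulVec]
  constructor
  · ext i j
    simp only [Matrix.conjTranspose_apply, outer, Matrix.of_apply, star_mul',
      RCLike.star_def, Complex.conj_conj]
    ring
  · intro x
    have h : dotProduct (star x) ((outer v).mulVec x) =
        star (dotc v x) * dotc v x := by
      have : star (dotc v x) = (starRingEnd ℂ) (dotc v x) := rfl
      rw [this, conj_dotc, dotc, Finset.sum_mul_sum]
      simp only [dotProduct, Matrix.mulVec, Pi.star_apply, outer, Matrix.of_apply,
        Finset.mul_sum]
      refine Finset.sum_congr rfl fun i _ => Finset.sum_congr rfl fun j _ => ?_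
      simp only [RCLike.star_def]
      ring
    rw [h]
    exact star_mul_self_nonneg _

lemma sum_outer_ket {d : ℕ} : ∑ v : Fin d, outer (ket d v) = 1 := by
  ext i j
  simp only [Matrix.sum_apply, outer, Matrix.of_apply, ket]
  by_cases h : i = j
  · subst h
    rw [Fintype.sum_eq_single i (fun v hv => by simp [Ne.symm hv])]
    simp
  · rw [Matrix.one_apply_ne h, Finset.sum_eq_zero]
    intro v _
    by_cases hv : i = v
    · subst hv; simp [Ne.symm h]
    · simp [hv]

lemma omega_ne_zero {d : ℕ} : ω d ≠ 0 := by
  intro h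
  have := abs_omega (d := d)
  rw [h] at this
  simp at this

lemma sqrt_d_sq {d : ℕ} : ((Real.sqrt d : ℝ) : ℂ) * ((Real.sqrt d : ℝ) : ℂ) = (d : ℂ) := by
  rw [← Complex.ofReal_mul, Real.mul_self_sqrt (Nat.cast_nonneg d)]
  norm_cast

lemma sum_outer_fv {d : ℕ} (hd : 0 < d) : ∑ v : Fin d, outer (fv d v) = 1 := by
  have hζ := Complex.isPrimitiveRoot_exp d hd.ne'
  have hdC : (d : ℂ) ≠ 0 := Nat.cast_ne_zero.mpr hd.ne'
  ext i j
  have key : ∀ v : Fin d, outer (fv d v) i j =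
      (ω d ^ (i : ℕ) * ((ω d)⁻¹) ^ (j : ℕ)) ^ (v : ℕ) / (d : ℂ) := by
    intro v
    simp only [outer, Matrix.of_apply, fv, map_div₀, Complex.conj_ofReal, _root_.map_pow,
      conj_omega]
    rw [div_mul_div_comm, sqrt_d_sq]
    congr 1
    rw [mul_pow, ← pow_mul, ← pow_mul, mul_comm (i:ℕ), mul_comm (j:ℕ)]
  rw [Matrix.sum_apply, Finset.sum_congr rfl fun v _ => key v, ← Finset.sum_div,
    Fin.sum_univ_eq_sum_range (fun n => (ω d ^ (i : ℕ) * ((ω d)⁻¹) ^ (j : ℕ)) ^ n)]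
  by_cases h : i = j
  · subst h
    have hx : ω d ^ (i : ℕ) * ((ω d)⁻¹) ^ (i : ℕ) = 1 := by
      rw [← mul_pow, mul_inv_cancel₀ omega_ne_zero, one_pow]
    rw [hx]
    simp [Matrix.one_apply_eq, hdC]
  · have hx1 : ω d ^ (i : ℕ) * ((ω d)⁻¹) ^ (j : ℕ) ≠ 1 := by
      intro hc
      apply h
      have : ω d ^ (i : ℕ) = ω d ^ (j : ℕ) := by
        have hj : ((ω d)⁻¹) ^ (j : ℕ) * ω d ^ (j : ℕ) = 1 := by
          rw [← mul_pow, inv_mul_cancel₀ omega_ne_zero, one_pow]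
        calc ω d ^ (i : ℕ) = ω d ^ (i : ℕ) * (((ω d)⁻¹) ^ (j : ℕ) * ω d ^ (j : ℕ)) := by
              rw [hj, mul_one]
          _ = (ω d ^ (i : ℕ) * ((ω d)⁻¹) ^ (j : ℕ)) * ω d ^ (j : ℕ) := by ring
          _ = ω d ^ (j : ℕ) := by rw [hc, one_mul]
      exact Fin.ext (hζ.pow_inj i.isLt j.isLt this)
    have hxd : (ω d ^ (i : ℕ) * ((ω d)⁻¹) ^ (j : ℕ)) ^ d = 1 := by
      rw [mul_pow, ← pow_mul, ← pow_mul, mul_comm (i:ℕ) d, mul_comm (j:ℕ) d, pow_mul, pow_mul,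
        omega_pow_d hd, inv_pow, omega_pow_d hd]
      simp
    rw [geom_sum_eq hx1, hxd, Matrix.one_apply_ne h]
    simp

lemma Fm_mulVec_e0 {d : ℕ} (hd : 0 < d) (j : Fin d) :
    (Fm d).mulVec (e0 d) j = 1 / ((Real.sqrt d : ℝ) : ℂ) := by
  rw [Matrix.mulVec, dotProduct]
  have key : ∀ k : Fin d, Fm d j k * e0 d k =
      if k = (⟨0, hd⟩ : Fin d) then 1 / ((Real.sqrt d : ℝ) : ℂ) else 0 := by
    intro k
    by_cases hk : k = (⟨0, hd⟩ : Fin d)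
    · subst hk
      simp [Fm, e0]
    · have : ¬ ((k : ℕ) = 0) := by simpa [Fin.ext_iff] using hk
      simp [e0, this, hk]
  rw [Finset.sum_congr rfl fun k _ => key k, Finset.sum_ite_eq' _ _ _]
  simp

lemma Psi_apply {d : ℕ} (hd : 0 < d) (j : Fin d) :
    Psi d j = (((Real.sqrt (2 * (1 + 1 / Real.sqrt d)) : ℝ) : ℂ))⁻¹ *
      ((if (j : ℕ) = 0 then 1 else 0) + 1 / ((Real.sqrt d : ℝ) : ℂ)) := by
  rw [Psi, Pi.smul_apply, Pi.add_apply, Fm_mulVec_e0 hd, smul_eq_mul, e0]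

lemma sum_Psi {d : ℕ} (hd : 0 < d) :
    ∑ k : Fin d, Psi d k = (((Real.sqrt (2 * (1 + 1 / Real.sqrt d)) : ℝ) : ℂ))⁻¹ *
      (1 + (d : ℂ) / ((Real.sqrt d : ℝ) : ℂ)) := by
  rw [Finset.sum_congr rfl fun k _ => Psi_apply hd k, ← Finset.mul_sum]
  congr 1
  rw [Finset.sum_add_distrib]
  congr 1
  · have key : ∀ k : Fin d, (if (k : ℕ) = 0 then (1:ℂ) else 0) =
        if k = (⟨0, hd⟩ : Fin d) then 1 else 0 := by
      intro k; simp [Fin.ext_iff]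
    rw [Finset.sum_congr rfl fun k _ => key k, Finset.sum_ite_eq' _ _ _]
    simp
  · rw [Finset.sum_const, Finset.card_univ, Fintype.card_fin, nsmul_eq_mul]
    rw [div_eq_mul_inv, div_eq_mul_inv, one_mul]

lemma dotc_ket_enc {d : ℕ} (hd : 0 < d) (y₀ y₁ : Fin d) :
    dotc (ket d y₀) (enc d y₀ y₁) = Psi d ⟨0, hd⟩ := by
  rw [dotc]
  have key : ∀ j : Fin d, (starRingEnd ℂ) (ket d y₀ j) * enc d y₀ y₁ j =
      if j = y₀ then enc d y₀ y₁ j else 0 := by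
    intro j
    by_cases hj : j = y₀
    · subst hj; simp [ket]
    · simp [ket, hj]
  rw [Finset.sum_congr rfl fun j _ => key j, Finset.sum_ite_eq' _ _ _]
  simp only [Finset.mem_univ, if_true]
  rw [enc_apply hd]
  have key2 : ∀ k : Fin d,
      (if (y₀ : ℕ) = ((k : ℕ) + (y₀ : ℕ)) % d then (1:ℂ) else 0) *
        (ω d ^ ((k : ℕ) * (y₁ : ℕ)) * Psi d k) =
      if k = (⟨0, hd⟩ : Fin d) then Psi d ⟨0, hd⟩ else 0 := by
    intro k
    by_cases hk : k = (⟨0, hd⟩ : Fin d)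
    · subst hk
      simp [Nat.mod_eq_of_lt y₀.isLt]
    · have hk0 : (k : ℕ) ≠ 0 := by simpa [Fin.ext_iff] using hk
      have hcond : ¬ ((y₀ : ℕ) = ((k : ℕ) + (y₀ : ℕ)) % d) := by
        intro hc
        have hlt := k.isLt
        have hlt2 := y₀.isLt
        rcases Nat.lt_or_ge ((k : ℕ) + (y₀ : ℕ)) d with h | h
        · rw [Nat.mod_eq_of_lt h] at hc; omega
        · rw [Nat.mod_eq_sub_mod h, Nat.mod_eq_of_lt (by omega)] at hc; omega
      simp [hcond, hk]
  rw [Finset.sum_congr rfl fun k _ => key2 k, Finset.sum_ite_eq' _ _ _]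
  simp

lemma dotc_fv_enc {d : ℕ} (hd : 0 < d) (y₀ y₁ : Fin d) :
    dotc (fv d y₁) (enc d y₀ y₁) =
      (starRingEnd ℂ) (ω d ^ ((y₀ : ℕ) * (y₁ : ℕ))) * (∑ k : Fin d, Psi d k) /
        ((Real.sqrt d : ℝ) : ℂ) := by
  rw [dotc]
  have step1 : ∀ j : Fin d, (starRingEnd ℂ) (fv d y₁ j) * enc d y₀ y₁ j =
      ∑ k : Fin d, (if (j:ℕ) = ((k:ℕ) + (y₀:ℕ)) % d then (1:ℂ) else 0) *
        ((starRingEnd ℂ) (fv d y₁ j) * (ω d ^ ((k:ℕ)*(y₁:ℕ)) * Psi d k)) := by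
    intro j
    rw [enc_apply hd, Finset.mul_sum]
    refine Finset.sum_congr rfl fun k _ => ?_
    ring
  rw [Finset.sum_congr rfl fun j _ => step1 j, Finset.sum_comm]
  have step2 : ∀ k : Fin d,
      (∑ j : Fin d, (if (j:ℕ) = ((k:ℕ) + (y₀:ℕ)) % d then (1:ℂ) else 0) *
        ((starRingEnd ℂ) (fv d y₁ j) * (ω d ^ ((k:ℕ)*(y₁:ℕ)) * Psi d k))) =
      (starRingEnd ℂ) (ω d ^ ((y₀ : ℕ) * (y₁ : ℕ))) * Psi d k / ((Real.sqrt d : ℝ) : ℂ) := by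
    intro k
    have hlt : ((k:ℕ) + (y₀:ℕ)) % d < d := Nat.mod_lt _ hd
    have key : ∀ j : Fin d, (if (j:ℕ) = ((k:ℕ) + (y₀:ℕ)) % d then (1:ℂ) else 0) *
        ((starRingEnd ℂ) (fv d y₁ j) * (ω d ^ ((k:ℕ)*(y₁:ℕ)) * Psi d k)) =
        if j = (⟨((k:ℕ) + (y₀:ℕ)) % d, hlt⟩ : Fin d) then
          (starRingEnd ℂ) (fv d y₁ ⟨((k:ℕ) + (y₀:ℕ)) % d, hlt⟩) *
            (ω d ^ ((k:ℕ)*(y₁:ℕ)) * Psi d k) else 0 := by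
      intro j
      by_cases hj : j = (⟨((k:ℕ) + (y₀:ℕ)) % d, hlt⟩ : Fin d)
      · subst hj; simp
      · have : ¬ ((j:ℕ) = ((k:ℕ) + (y₀:ℕ)) % d) := by simpa [Fin.ext_iff] using hj
        simp [this, hj]
    rw [Finset.sum_congr rfl fun j _ => key j, Finset.sum_ite_eq' _ _ _]
    simp only [Finset.mem_univ, if_true]
    have hfv : fv d y₁ (⟨((k:ℕ) + (y₀:ℕ)) % d, hlt⟩ : Fin d) =
        ω d ^ (((k:ℕ) + (y₀:ℕ)) * (y₁:ℕ)) / ((Real.sqrt d : ℝ) : ℂ) := by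
      rw [fv]
      congr 1
      show ω d ^ ((((k:ℕ) + (y₀:ℕ)) % d) * (y₁:ℕ)) = _
      rw [pow_mul, pow_mul, omega_pow_mod hd]
    rw [hfv, map_div₀, Complex.conj_ofReal]
    have hsplit : (starRingEnd ℂ) (ω d ^ (((k:ℕ) + (y₀:ℕ)) * (y₁:ℕ))) =
        (starRingEnd ℂ) (ω d ^ ((k:ℕ) * (y₁:ℕ))) *
          (starRingEnd ℂ) (ω d ^ ((y₀:ℕ) * (y₁:ℕ))) := by
      rw [← _root_.map_mul, ← pow_add, add_mul]
    rw [hsplit]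
    have hcc := conj_mul_omega_pow (d := d) ((k:ℕ) * (y₁:ℕ))
    linear_combination ((starRingEnd ℂ) (ω d ^ ((y₀:ℕ)*(y₁:ℕ))) * Psi d k /
      ((Real.sqrt d : ℝ) : ℂ)) * hcc
  rw [Finset.sum_congr rfl fun k _ => step2 k, ← Finset.sum_div, ← Finset.mul_sum]

lemma real_calc1 {s : ℝ} (hs : 0 < s) :
    ((Real.sqrt (2 * (1 + 1 / s)))⁻¹ * (1 + 1 / s)) ^ 2 = 1 / 2 + 1 / (2 * s) := by
  have h1 : (0:ℝ) ≤ 2 * (1 + 1 / s) := by positivity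
  have hN : Real.sqrt (2 * (1 + 1 / s)) ^ 2 = 2 * (1 + 1 / s) := Real.sq_sqrt h1
  rw [mul_pow, inv_pow, hN]
  have hs' : s ≠ 0 := hs.ne'
  field_simp

lemma real_calc2 {s : ℝ} (hs : 0 < s) :
    ((Real.sqrt (2 * (1 + 1 / s)))⁻¹ * (1 + (s * s) / s)) ^ 2 / (s * s)
      = 1 / 2 + 1 / (2 * s) := by
  have h1 : (0:ℝ) ≤ 2 * (1 + 1 / s) := by positivity
  have hN : Real.sqrt (2 * (1 + 1 / s)) ^ 2 = 2 * (1 + 1 / s) := Real.sq_sqrt h1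
  have hs' : s ≠ 0 := hs.ne'
  rw [mul_div_assoc, div_self hs', mul_one, mul_pow, inv_pow, hN]
  have h2 : (1:ℝ) + 1/s ≠ 0 := by positivity
  field_simp
  ring

lemma trace0 {d : ℕ} (hd : 0 < d) (y₀ y₁ : Fin d) :
    ((outer (ket d y₀) * outer (enc d y₀ y₁)).trace).re
      = 1 / 2 + 1 / (2 * Real.sqrt d) := by
  have hs : 0 < Real.sqrt d := Real.sqrt_pos.mpr (by exact_mod_cast hd)
  rw [trace_outer_re, dotc_ket_enc hd, Psi_apply hd]
  have h0 : (if (((⟨0, hd⟩ : Fin d)) : ℕ) = 0 then (1:ℂ) else 0) = 1 := if_pos rfl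
  rw [h0]
  have hcast : (((Real.sqrt (2 * (1 + 1 / Real.sqrt d)) : ℝ) : ℂ))⁻¹ *
      ((1:ℂ) + 1 / ((Real.sqrt d : ℝ) : ℂ)) =
      ((((Real.sqrt (2 * (1 + 1 / Real.sqrt d)))⁻¹ * (1 + 1 / Real.sqrt d) : ℝ)) : ℂ) := by
    push_cast
    ring
  rw [hcast, Complex.normSq_ofReal, ← sq, real_calc1 hs]

lemma trace1 {d : ℕ} (hd : 0 < d) (y₀ y₁ : Fin d) :
    ((outer (fv d y₁) * outer (enc d y₀ y₁)).trace).re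
      = 1 / 2 + 1 / (2 * Real.sqrt d) := by
  have hs : 0 < Real.sqrt d := Real.sqrt_pos.mpr (by exact_mod_cast hd)
  have hss : Real.sqrt d * Real.sqrt d = (d : ℝ) := Real.mul_self_sqrt (Nat.cast_nonneg d)
  rw [trace_outer_re, dotc_fv_enc hd, sum_Psi hd]
  rw [map_div₀ Complex.normSq, _root_.map_mul Complex.normSq, Complex.normSq_conj,
    normSq_omega_pow, one_mul]
  have hcast : (((Real.sqrt (2 * (1 + 1 / Real.sqrt d)) : ℝ) : ℂ))⁻¹ *
      ((1:ℂ) + (d : ℂ) / ((Real.sqrt d : ℝ) : ℂ)) =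
      ((((Real.sqrt (2 * (1 + 1 / Real.sqrt d)))⁻¹ *
        (1 + (Real.sqrt d * Real.sqrt d) / Real.sqrt d) : ℝ)) : ℂ) := by
    rw [hss]
    push_cast
    ring
  rw [hcast, Complex.normSq_ofReal, Complex.normSq_ofReal, ← sq, hss]
  have h := real_calc2 (s := Real.sqrt d) hs
  rw [hss] at h
  exact h

theorem stmt_15 (d : ℕ) (hd : Nat.Prime d)
    (q : Fin d × Fin d → ℝ) (hq0 : ∀ y, 0 ≤ q y) (hq1 : ∀ y, q y ≤ 1) :
    (∀ c : Fin 2, ∃ M : Fin d → Matrix (Fin d) (Fin d) ℂ,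
      (∀ v, (M v).PosSemidef) ∧ (∑ v, M v = 1) ∧
      (1 / 2 + 1 / (2 * Real.sqrt d)) *
          (∑ y₀ : Fin d, ∑ y₁ : Fin d,
            ((d : ℝ) ^ 2)⁻¹ * (if c = 0 then q (y₀, y₁) else 1 - q (y₀, y₁)))
        ≤ ∑ y₀ : Fin d, ∑ y₁ : Fin d,
            (((d : ℝ) ^ 2)⁻¹ * (if c = 0 then q (y₀, y₁) else 1 - q (y₀, y₁))) *
              ((M (if c = 0 then y₀ else y₁) * outer (enc d y₀ y₁)).trace).re) ∧
    -Real.logb 2 (1 / 2 + 1 / (2 * Real.sqrt d)) ≤ 1 := by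
  have hd0 : 0 < d := hd.pos
  have hs : 0 < Real.sqrt d := Real.sqrt_pos.mpr (by exact_mod_cast hd0)
  constructor
  · intro c
    by_cases hc : c = 0
    · refine ⟨fun v => outer (ket d v), fun v => posSemidef_outer _, sum_outer_ket, ?_⟩
      refine le_of_eq ?_
      rw [Finset.mul_sum]
      refine Finset.sum_congr rfl fun y₀ _ => ?_
      rw [Finset.mul_sum]
      refine Finset.sum_congr rfl fun y₁ _ => ?_
      simp only [if_pos hc]
      rw [trace0 hd0 y₀ y₁]
      ring
    · refine ⟨fun v => outer (fv d v), fun v => posSemidef_outer _, sum_outer_fv hd0, ?_⟩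
      refine le_of_eq ?_
      rw [Finset.mul_sum]
      refine Finset.sum_congr rfl fun y₀ _ => ?_
      rw [Finset.mul_sum]
      refine Finset.sum_congr rfl fun y₁ _ => ?_
      simp only [if_neg hc]
      rw [trace1 hd0 y₀ y₁]
      ring
  · have hp : (0:ℝ) < 1 / 2 + 1 / (2 * Real.sqrt d) := by
      have h2 : (0:ℝ) < 2 * Real.sqrt d := by linarith
      have := one_div_pos.mpr h2
      linarith
    have h12 : (1:ℝ) / 2 ≤ 1 / 2 + 1 / (2 * Real.sqrt d) := by
      have h2 : (0:ℝ) < 2 * Real.sqrt d := by linarith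
      have := one_div_pos.mpr h2
      linarith
    have hlog := (Real.logb_le_logb (by norm_num : (1:ℝ) < 2)
      (by norm_num : (0:ℝ) < 1 / 2) hp).mpr h12
    have hhalf : Real.logb 2 (1 / 2) = -1 := by
      rw [show (1:ℝ)/2 = 2⁻¹ by norm_num, Real.logb_inv]
      simp
    rw [hhalf] at hlog
    linarith
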